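/- Let r be a pre-hereditary Hoehnke radical on S-acts, A a semisimple S-act (r(A) = Δ_A), and B an r-dense subact of A. Then B is intersection-large in A: for every subact X of A with at least two elements, |B ∩ X| ≥ 2. -/
import Mathlib


universe u

variable {S : Type u} [Monoid S]

/-- An `S`-act homomorphism (equivariant map). -/
def IsActHom (S : Type u) [Monoid S] {A B : Type u} [MulAction S A] [MulAction S B]
    (f : A → B) : Prop :=
  ∀ (s : S) (a : A), f (s • a) = s • f a

/-- A subact: a nonempty subset closed under the action. -/
def IsSubact (S : Type u) [Monoid S] {A : Type u} [MulAction S A] (B : Set A) : Prop :=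
  B.Nonempty ∧ ∀ (s : S), ∀ a ∈ B, s • a ∈ B

/-- A congruence on an `S`-act: an equivalence relation compatible with the action. -/
structure ActCong (S : Type u) [Monoid S] (A : Type u) [MulAction S A] where
  r : A → A → Prop
  iseqv : Equivalence r
  compat : ∀ (s : S) (a b : A), r a b → r (s • a) (s • b)

def ActCong.toSetoid {A : Type u} [MulAction S A] (χ : ActCong S A) : Setoid A :=
  ⟨χ.r, χ.iseqv⟩

instance actQuotSMul {A : Type u} [MulAction S A] (χ : ActCong S A) :
    SMul S (Quotient χ.toSetoid) :=
  ⟨fun s => Quotient.map (fun a => s • a) (fun a b h => χ.compat s a b h)⟩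

instance actQuotMulAction {A : Type u} [MulAction S A] (χ : ActCong S A) :
    MulAction S (Quotient χ.toSetoid) where
  one_smul := by
    intro x
    induction x using Quotient.inductionOn with
    | h a => exact congrArg (Quotient.mk χ.toSetoid) (one_smul S a)
  mul_smul := by
    intro s t x
    induction x using Quotient.inductionOn with
    | h a => exact congrArg (Quotient.mk χ.toSetoid) (mul_smul s t a)

/-- The Rees congruence determined by an action-closed subset `B`. -/
def reesCong {A : Type u} [MulAction S A] (B : Set A)
    (hB : ∀ (s : S), ∀ a ∈ B, s • a ∈ B) : ActCong S A where
  r a b := a = b ∨ (a ∈ B ∧ b ∈ B)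
  iseqv := by
    constructor
    · exact fun a => Or.inl rfl
    · rintro a b (rfl | ⟨h1, h2⟩)
      exacts [Or.inl rfl, Or.inr ⟨h2, h1⟩]
    · rintro a b c (rfl | ⟨h1, h2⟩) h
      · exact h
      · rcases h with rfl | ⟨h3, h4⟩
        exacts [Or.inr ⟨h1, h2⟩, Or.inr ⟨h1, h4⟩]
  compat := by
    rintro s a b (rfl | ⟨h1, h2⟩)
    exacts [Or.inl rfl, Or.inr ⟨hB s a h1, hB s b h2⟩]

/-- A Hoehnke radical on `S`-acts. -/
structure HoehnkeRadical (S : Type u) [Monoid S] : Type (u + 1) where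
  rad : ∀ (A : Type u) [MulAction S A], ActCong S A
  functorial : ∀ {A B : Type u} [MulAction S A] [MulAction S B] (f : A → B),
    IsActHom S f → ∀ a a' : A, (rad A).r a a' → (rad B).r (f a) (f a')
  radQuot : ∀ (A : Type u) [MulAction S A],
    ∀ x y : Quotient (rad A).toSetoid, (rad (Quotient (rad A).toSetoid)).r x y → x = y

/-- The closure `c^r_A(B)`: preimage of the `r(A/B)`-class of the collapsed point `B`. -/
def rClosure (r : HoehnkeRadical S) {A : Type u} [MulAction S A] (B : Set A)
    (hB : ∀ (s : S), ∀ a ∈ B, s • a ∈ B) : Set A :=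
  {a : A | ∃ b ∈ B, (r.rad (Quotient (reesCong B hB).toSetoid)).r
      (Quotient.mk (reesCong B hB).toSetoid a) (Quotient.mk (reesCong B hB).toSetoid b)}

/-- `B` is `r`-dense in `A`: the Rees quotient `A/B` is a radical act, `r(A/B) = ∇`. -/
def IsRDense (r : HoehnkeRadical S) {A : Type u} [MulAction S A] (B : Set A)
    (hB : ∀ (s : S), ∀ a ∈ B, s • a ∈ B) : Prop :=
  ∀ x y : Quotient (reesCong B hB).toSetoid, (r.rad (Quotient (reesCong B hB).toSetoid)).r x y

theorem image_closed {A C : Type u} [MulAction S A] [MulAction S C] {f : A → C}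
    (hf : IsActHom S f) {B : Set A} (hB : ∀ (s : S), ∀ a ∈ B, s • a ∈ B) :
    ∀ (s : S), ∀ c ∈ f '' B, s • c ∈ f '' B := by
  rintro s c ⟨a, ha, rfl⟩
  exact ⟨s • a, hB s a ha, hf s a⟩

theorem range_closed {A C : Type u} [MulAction S A] [MulAction S C] {f : A → C}
    (hf : IsActHom S f) :
    ∀ (s : S), ∀ c ∈ Set.range f, s • c ∈ Set.range f := by
  rintro s c ⟨a, rfl⟩
  exact ⟨s • a, hf s a⟩

theorem rClosure_closed (r : HoehnkeRadical S) {A : Type u} [MulAction S A]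
    (B : Set A) (hB : ∀ (s : S), ∀ a ∈ B, s • a ∈ B) :
    ∀ (s : S), ∀ a ∈ rClosure r B hB, s • a ∈ rClosure r B hB := by
  rintro s a ⟨b, hb, hab⟩
  exact ⟨s • b, hB s b hb, (r.rad _).compat s _ _ hab⟩

/-- The join of two congruences. -/
def congJoin {A : Type u} [MulAction S A] (τ₁ τ₂ : ActCong S A) : ActCong S A where
  r a b := ∀ θ : ActCong S A, (∀ x y, τ₁.r x y → θ.r x y) → (∀ x y, τ₂.r x y → θ.r x y) → θ.r a b
  iseqv := by
    constructor
    · exact fun a θ _ _ => θ.iseqv.refl a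
    · exact fun h θ h1 h2 => θ.iseqv.symm (h θ h1 h2)
    · exact fun h h' θ h1 h2 => θ.iseqv.trans (h θ h1 h2) (h' θ h1 h2)
  compat := fun s a b h θ h1 h2 => θ.compat s a b (h θ h1 h2)

/-- For `κ ≤ τ` the induced congruence `τ/κ` on the quotient `A/κ`. -/
def quotCong {A : Type u} [MulAction S A] (κ τ : ActCong S A)
    (h : ∀ a b, κ.r a b → τ.r a b) : ActCong S (Quotient κ.toSetoid) where
  r x y := ∃ a b : A, x = Quotient.mk κ.toSetoid a ∧ y = Quotient.mk κ.toSetoid b ∧ τ.r a b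
  iseqv := by
    constructor
    · intro x
      obtain ⟨a, rfl⟩ := Quotient.exists_rep x
      exact ⟨a, a, rfl, rfl, τ.iseqv.refl a⟩
    · rintro x y ⟨a, b, rfl, rfl, hab⟩
      exact ⟨b, a, rfl, rfl, τ.iseqv.symm hab⟩
    · rintro x y z ⟨a, b, rfl, hy, hab⟩ ⟨b', c, hy', rfl, hbc⟩
      refine ⟨a, c, rfl, rfl, τ.iseqv.trans hab (τ.iseqv.trans ?_ hbc)⟩
      exact h _ _ (Quotient.exact (hy.symm.trans hy'))
  compat := by
    rintro s x y ⟨a, b, rfl, rfl, hab⟩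
    exact ⟨s • a, s • b, rfl, rfl, τ.compat s a b hab⟩

/-- The smallest extension of an on-`B` congruence `χ` to the whole act. -/
def extCong {A : Type u} [MulAction S A] (χ : A → A → Prop)
    (hsymm : ∀ a b, χ a b → χ b a) (htrans : ∀ a b c, χ a b → χ b c → χ a c)
    (hcompat : ∀ (s : S) (a b : A), χ a b → χ (s • a) (s • b)) : ActCong S A where
  r a b := a = b ∨ χ a b
  iseqv := by
    constructor
    · exact fun a => Or.inl rfl
    · rintro a b (rfl | h)
      exacts [Or.inl rfl, Or.inr (hsymm _ _ h)]
    · rintro a b c (rfl | h) h'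
      · exact h'
      · rcases h' with rfl | h'
        exacts [Or.inr h, Or.inr (htrans _ _ _ h h')]
  compat := by
    rintro s a b (rfl | h)
    exacts [Or.inl rfl, Or.inr (hcompat s a b h)]

theorem rdense_is_intersection_large_of_preHereditary {S : Type u} [Monoid S]
    (r : HoehnkeRadical S)
    (hpre : ∀ (A : Type u) [MulAction S A] (a₀ : A),
      Set.Nontrivial {x | (r.rad A).r x a₀} →
      (∀ (s : S), ∀ x ∈ {x | (r.rad A).r x a₀}, s • x ∈ {x | (r.rad A).r x a₀}) →
      ∀ Y : SubMulAction S A, (Y : Set A).Nonempty → (Y : Set A) ⊆ {x | (r.rad A).r x a₀} →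
      ∀ y y' : ↥Y, (r.rad ↥Y).r y y')
    {A : Type u} [MulAction S A] (hA : ∀ x y : A, (r.rad A).r x y → x = y)
    (B : Set A) (hB : IsSubact S B) (hdense : IsRDense r B hB.2) :
    ∀ X : Set A, IsSubact S X → X.Nontrivial → (B ∩ X).Nontrivial := by
  intro X hX hXnt
  by_contra hcon
  rw [Set.not_nontrivial_iff] at hcon
  set Q := Quotient (reesCong B hB.2).toSetoid with hQ
  set π : A → Q := Quotient.mk (reesCong B hB.2).toSetoid with hπ
  have hπhom : IsActHom S π := fun s a => rfl
  have hinj : ∀ x ∈ X, ∀ x' ∈ X, π x = π x' → x = x' := by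
    intro x hx x' hx' h
    rcases Quotient.exact h with h | ⟨h1, h2⟩
    · exact h
    · exact hcon ⟨h1, hx⟩ ⟨h2, hx'⟩
  obtain ⟨x₁, hx₁, x₂, hx₂, hne⟩ := hXnt
  obtain ⟨b₀, hb₀⟩ := hB.1
  let Y : SubMulAction S Q :=
    ⟨π '' X, fun {s x} hx => image_closed hπhom hX.2 s x hx⟩
  have hclass : ∀ q : Q, q ∈ {x | (r.rad Q).r x (π b₀)} := fun q => hdense q (π b₀)
  have hYall := hpre Q (π b₀)
    ⟨π x₁, hclass _, π x₂, hclass _, fun h => hne (hinj _ hx₁ _ hx₂ h)⟩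
    (fun s x _ => hclass _)
    Y ⟨π x₁, ⟨x₁, hx₁, rfl⟩⟩
    (fun y _ => hclass y)
  have hex : ∀ y : ↥Y, ∃ x, x ∈ X ∧ π x = ↑y := fun y => y.2
  choose g hgX hgπ using hex
  have ghom : IsActHom S g := by
    intro s y
    apply hinj _ (hgX (s • y)) _ (hX.2 s _ (hgX y))
    rw [hgπ (s • y)]
    have h1 : (↑(s • y) : Q) = s • (↑y : Q) := rfl
    rw [h1, ← hgπ y]
    exact (hπhom s (g y)).symm
  have key : ∀ y y' : ↥Y, (y : Q) = (y' : Q) := by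
    intro y y'
    have h1 := r.functorial g ghom y y' (hYall y y')
    have h2 := hA _ _ h1
    rw [← hgπ y, ← hgπ y', h2]
  exact hne (hinj _ hx₁ _ hx₂
    (key ⟨π x₁, ⟨x₁, hx₁, rfl⟩⟩ ⟨π x₂, ⟨x₂, hx₂, rfl⟩⟩))
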